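/- Let T and S be left braces, let b : T×T → S be a symmetric map that is additive in each variable (a symmetric bilinear form), and let α : (S,·) → Aut(T,+,·) be a group homomorphism into the brace automorphisms of T, with α_s = α(s). Then the asymmetric product compatibility condition, s·b(t₂,t₃) + b(t₁·α_s(t₂+t₃), t₁) = b(t₁·α_s(t₂), t₁·α_s(t₃)) + s for all s ∈ S and t₁,t₂,t₃ ∈ T, holds if and only if both of the following hold: λ_s(b(t₂,t₃)) = b(α_s(t₂), α_s(t₃)) for all s ∈ S, t₂,t₃ ∈ T, and b(t₂,t₃) = b(λ_{t₁}(t₂), λ_{t₁}(t₃)) for all t₁,t₂,t₃ ∈ T. -/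

import Mathlib

/-- for a symmetric bilinear form `b : T×T → S` and a group homomorphism
`α : (S,·) → Aut(T,+,·)`, the asymmetric product compatibility condition holds if and
only if `λ_s(b(t₂,t₃)) = b(α_s(t₂),α_s(t₃))` and `b(t₂,t₃) = b(λ_{t₁}(t₂),λ_{t₁}(t₃))`,
where `λ_a(x) = a·x − a`. -/
theorem asymmetric_product_condition_iff
    {T S : Type*} [AddCommGroup T] [Group T] [AddCommGroup S] [Group S]
    (hT : ∀ a b c : T, a * (b + c) + a = a * b + a * c)
    (hS : ∀ a b c : S, a * (b + c) + a = a * b + a * c)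
    (b : T → T → S)
    (hbsymm : ∀ t₁ t₂ : T, b t₁ t₂ = b t₂ t₁)
    (hbadd : ∀ t₁ t₂ t₃ : T, b (t₁ + t₂) t₃ = b t₁ t₃ + b t₂ t₃)
    (α : S → T → T)
    (hαbij : ∀ s : S, Function.Bijective (α s))
    (hαadd : ∀ (s : S) (t₁ t₂ : T), α s (t₁ + t₂) = α s t₁ + α s t₂)
    (hαmul : ∀ (s : S) (t₁ t₂ : T), α s (t₁ * t₂) = α s t₁ * α s t₂)
    (hαone : α 1 = id)
    (hαhom : ∀ s₁ s₂ : S, α (s₁ * s₂) = α s₁ ∘ α s₂) :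
    (∀ (s : S) (t₁ t₂ t₃ : T),
        s * b t₂ t₃ + b (t₁ * α s (t₂ + t₃)) t₁ = b (t₁ * α s t₂) (t₁ * α s t₃) + s) ↔
      ((∀ (s : S) (t₂ t₃ : T), s * b t₂ t₃ - s = b (α s t₂) (α s t₃)) ∧
       (∀ t₁ t₂ t₃ : T, b t₂ t₃ = b (t₁ * t₂ - t₁) (t₁ * t₃ - t₁))) := by
  -- In a left brace, 1 = 0
  have hT0 : (1 : T) = 0 := by
    have h := hT 1 0 0
    rw [add_zero] at h
    have h2 := add_left_cancel h
    rw [one_mul] at h2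
    exact h2
  have hS0 : (1 : S) = 0 := by
    have h := hS 1 0 0
    rw [add_zero] at h
    have h2 := add_left_cancel h
    rw [one_mul] at h2
    exact h2
  have hb0 : ∀ x : T, b 0 x = 0 := by
    intro x
    have h := hbadd 0 0 x
    rw [add_zero] at h
    exact left_eq_add.mp h
  have hb0' : ∀ x : T, b x 0 = 0 := fun x => (hbsymm x 0).trans (hb0 x)
  have hbneg : ∀ x y : T, b (-x) y = -(b x y) := by
    intro x y
    have h := hbadd x (-x) y
    rw [add_neg_cancel, hb0] at h
    exact (eq_neg_of_add_eq_zero_right h.symm)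
  have hbsub : ∀ x y z : T, b (x - y) z = b x z - b y z := by
    intro x y z
    rw [sub_eq_add_neg, hbadd, hbneg, sub_eq_add_neg]
  have hbadd₂ : ∀ z x y : T, b z (x + y) = b z x + b z y := by
    intro z x y
    rw [hbsymm z, hbadd, hbsymm x z, hbsymm y z]
  have hbsub₂ : ∀ z x y : T, b z (x - y) = b z x - b z y := by
    intro z x y
    rw [hbsymm z, hbsub, hbsymm x z, hbsymm y z]
  have hbrace : ∀ a x y : T, a * (x + y) = a * x + a * y - a :=
    fun a x y => eq_sub_of_add_eq (hT a x y)
  constructor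
  · intro H
    constructor
    · intro s t₂ t₃
      have h := H s 1 t₂ t₃
      simp only [one_mul] at h
      rw [hT0, hb0', add_zero] at h
      exact sub_eq_of_eq_add h
    · intro t₁ t₂ t₃
      have h := H 1 t₁ t₂ t₃
      rw [hαone] at h
      simp only [id_eq, one_mul] at h
      rw [hS0, add_zero] at h
      rw [hbrace t₁ t₂ t₃, hbsub, hbadd] at h
      rw [hbsub, hbsub₂, hbsub₂, hbsymm t₁ (t₁ * t₃)]
      rw [← h]
      abel
  · rintro ⟨h1, h2⟩ s t₁ t₂ t₃
    have e1 : s * b t₂ t₃ = b (α s t₂) (α s t₃) + s := eq_add_of_sub_eq (h1 s t₂ t₃)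
    have e2 := h2 t₁ (α s t₂) (α s t₃)
    rw [hbsub, hbsub₂, hbsub₂, hbsymm t₁ (t₁ * α s t₃)] at e2
    rw [hαadd, hbrace, hbsub, hbadd, e1, e2]
    abel
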